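/- Every finite poset admitting a representation by unit-length real intervals where each interval may be open, closed, or half-open (i.e., any of the four interval types with endpoints l(x) and l(x)+1), with x < y iff every point of the interval of x is less than every point of the interval of y, has order dimension at most 3. -/

import Mathlib

/-- `L` is a linear extension of the partial order on `α`. -/
def IsLinearExtension {α : Type*} [PartialOrder α] (L : α → α → Prop) : Prop :=
  IsLinearOrder α L ∧ ∀ x y : α, x ≤ y → L x y

/-- The order dimension of `α` is at most `t`. -/
def DimLE (α : Type*) [PartialOrder α] (t : ℕ) : Prop :=
  ∃ L : Fin t → α → α → Prop, (∀ i, IsLinearExtension (L i)) ∧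
    ∀ x y : α, x ≤ y ↔ ∀ i, L i x y

namespace Stmt13Aux

variable {α : Type*}

/-- A linear order pulled back along an injective key. -/
lemma keyLinear {K : Type*} [LinearOrder K] (k : α → K) (hk : Function.Injective k) :
    IsLinearOrder α (fun x y => k x ≤ k y) where
  refl a := le_refl _
  trans a b c hab hbc := le_trans hab hbc
  antisymm a b h1 h2 := hk (le_antisymm h1 h2)
  total a b := le_total _ _

variable (l : α → ℝ) (u v : α → ℤ) (W : α → ℕ)

/-- combinatorial left endpoint (`u z = 0` if closed, `1` if open). -/
def aval (z : α) : ℝ ×ₗ ℤ := toLex (l z, u z)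

/-- combinatorial right endpoint (`v z = 0` if closed, `-1` if open). -/
def bval (z : α) : ℝ ×ₗ ℤ := toLex (l z + 1, v z)

/-- the canonical within-block key. -/
def keyW (z : α) : (ℝ ×ₗ ℤ) ×ₗ ((ℝ ×ₗ ℤ) ×ₗ ℕ) :=
  toLex (aval l u z, toLex (bval l v z, W z))

/-- key for the first linear extension : blocks ascending, `keyW` descending inside. -/
noncomputable def key1 (z : α) : ℤ ×ₗ (((ℝ ×ₗ ℤ) ×ₗ ((ℝ ×ₗ ℤ) ×ₗ ℕ))ᵒᵈ) :=
  toLex (⌊l z⌋, OrderDual.toDual (keyW l u v W z))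

/-- group number for shift `σ`. -/
noncomputable def gg (σ : ℤ) (z : α) : ℤ := ⌊(l z + (σ : ℝ)) / 2⌋

/-- key for the grouped linear extensions (`σ = 0` or `1`). -/
noncomputable def keyG (σ : ℤ) (z : α) :
    ℤ ×ₗ ((ℝ ×ₗ ℤ) ×ₗ (ℤ ×ₗ ((ℝ ×ₗ ℤ) ×ₗ ℕ))) :=
  toLex (gg l σ z,
    if ⌊l z⌋ + σ = 2 * gg l σ z then
      toLex (bval l v z, toLex ((1 : ℤ), toLex (aval l u z, W z)))
    else
      toLex (aval l u z, toLex ((0 : ℤ), toLex (bval l v z, W z))))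

variable {l u v W}

lemma lt_of_ba {x y : α} (h : bval l v x < aval l u y) : l x + 1 ≤ l y := by
  rcases (Prod.Lex.lt_iff).mp h with h' | ⟨h', _⟩
  · exact le_of_lt h'
  · exact le_of_eq h'

lemma block_lt {x y : α} (h : bval l v x < aval l u y) : ⌊l x⌋ < ⌊l y⌋ := by
  have h1 : l x + 1 ≤ l y := lt_of_ba h
  have h2 : ⌊l x + 1⌋ ≤ ⌊l y⌋ := Int.floor_le_floor h1
  rw [show l x + 1 = l x + (1 : ℤ) by push_cast; ring, Int.floor_add_intCast] at h2
  omega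

lemma far_lt {x y : α} (h : ⌊l x⌋ + 2 ≤ ⌊l y⌋) : bval l v x < aval l u y := by
  apply (Prod.Lex.lt_iff).mpr
  left
  show l x + 1 < l y
  have h1 : l x < ⌊l x⌋ + 1 := Int.lt_floor_add_one _
  have h2 : (⌊l y⌋ : ℝ) ≤ l y := Int.floor_le _
  have h3 : ((⌊l x⌋ : ℝ) + 2) ≤ (⌊l y⌋ : ℝ) := by exact_mod_cast Int.cast_le.mpr h
  linarith

lemma gg_bounds (σ : ℤ) (z : α) :
    2 * gg l σ z ≤ ⌊l z⌋ + σ ∧ ⌊l z⌋ + σ ≤ 2 * gg l σ z + 1 := by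
  have h0 : ((gg l σ z : ℤ) : ℝ) ≤ (l z + σ) / 2 := Int.floor_le _
  have h1 : (l z + σ) / 2 < ((gg l σ z : ℤ) : ℝ) + 1 := Int.lt_floor_add_one _
  constructor
  · have hle : ((2 * gg l σ z : ℤ) : ℝ) ≤ l z + σ := by push_cast; linarith
    have := Int.le_floor.mpr hle
    rwa [Int.floor_add_intCast] at this
  · have hlt : l z + (σ : ℝ) < ((2 * gg l σ z + 2 : ℤ) : ℝ) := by push_cast; linarith
    have := Int.floor_lt.mpr hlt
    rw [Int.floor_add_intCast] at this
    omega

lemma gg_mono (σ : ℤ) {x y : α} (h : l x ≤ l y) : gg l σ x ≤ gg l σ y :=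
  Int.floor_le_floor (by linarith)

lemma ext1 {x y : α} (h : bval l v x < aval l u y) :
    key1 l u v W x < key1 l u v W y := by
  unfold key1
  exact (Prod.Lex.lt_iff).mpr (Or.inl (block_lt h))

lemma rev1b {x y : α} (h : ⌊l y⌋ < ⌊l x⌋) : key1 l u v W y < key1 l u v W x := by
  unfold key1
  exact (Prod.Lex.lt_iff).mpr (Or.inl h)

lemma rev1W {x y : α} (hb : ⌊l x⌋ = ⌊l y⌋) (hw : keyW l u v W x < keyW l u v W y) :
    key1 l u v W y < key1 l u v W x := by
  unfold key1
  exact (Prod.Lex.lt_iff).mpr (Or.inr ⟨hb.symm, OrderDual.toDual_lt_toDual.mpr hw⟩)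

lemma extG (σ : ℤ) {x y : α} (h : bval l v x < aval l u y) :
    keyG l u v W σ x < keyG l u v W σ y := by
  have hbl := block_lt h
  have hg : gg l σ x ≤ gg l σ y := gg_mono σ (by have := lt_of_ba h; linarith)
  rcases hg.lt_or_eq with hlt | heq
  · exact (Prod.Lex.lt_iff).mpr (Or.inl hlt)
  · have hx := gg_bounds (l := l) σ x
    have hy := gg_bounds (l := l) σ y
    have hxr : ⌊l x⌋ + σ = 2 * gg l σ x := by omega
    have hyr : ¬ (⌊l y⌋ + σ = 2 * gg l σ y) := by omega
    unfold keyG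
    rw [if_pos hxr, if_neg hyr]
    exact (Prod.Lex.lt_iff).mpr (Or.inr ⟨heq, (Prod.Lex.lt_iff).mpr (Or.inl h)⟩)

lemma revGsame (σ : ℤ) {x y : α} (hb : ⌊l x⌋ = ⌊l y⌋)
    (hodd : ¬ (⌊l x⌋ + σ = 2 * gg l σ x))
    (hw : keyW l u v W y < keyW l u v W x) :
    keyG l u v W σ y < keyG l u v W σ x := by
  have hx := gg_bounds (l := l) σ x
  have hy := gg_bounds (l := l) σ y
  have hgeq : gg l σ y = gg l σ x := by omega
  have hyodd : ¬ (⌊l y⌋ + σ = 2 * gg l σ y) := by omega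
  unfold keyG
  rw [if_neg hyodd, if_neg hodd]
  apply (Prod.Lex.lt_iff).mpr
  refine Or.inr ⟨hgeq, ?_⟩
  unfold keyW at hw
  rcases (Prod.Lex.lt_iff).mp hw with h' | ⟨h', h2⟩
  · exact (Prod.Lex.lt_iff).mpr (Or.inl h')
  · exact (Prod.Lex.lt_iff).mpr
      (Or.inr ⟨h', (Prod.Lex.lt_iff).mpr (Or.inr ⟨rfl, h2⟩)⟩)

lemma revGcross (σ : ℤ) {x y : α} (hb : ⌊l y⌋ = ⌊l x⌋ + 1)
    (heven : ⌊l x⌋ + σ = 2 * gg l σ x)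
    (hin : aval l u y ≤ bval l v x) :
    keyG l u v W σ y < keyG l u v W σ x := by
  have hx := gg_bounds (l := l) σ x
  have hy := gg_bounds (l := l) σ y
  have hgeq : gg l σ y = gg l σ x := by omega
  have hyodd : ¬ (⌊l y⌋ + σ = 2 * gg l σ y) := by omega
  unfold keyG
  rw [if_neg hyodd, if_pos heven]
  apply (Prod.Lex.lt_iff).mpr
  refine Or.inr ⟨hgeq, ?_⟩
  rcases hin.lt_or_eq with h' | h'
  · exact (Prod.Lex.lt_iff).mpr (Or.inl h')
  · exact (Prod.Lex.lt_iff).mpr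
      (Or.inr ⟨h', (Prod.Lex.lt_iff).mpr (Or.inl (by norm_num))⟩)

lemma keyW_inj (hW : Function.Injective W) : Function.Injective (keyW l u v W) := by
  intro x y h
  unfold keyW at h
  simp only [toLex_inj, Prod.mk.injEq] at h
  exact hW h.2.2

lemma key1_inj (hW : Function.Injective W) : Function.Injective (key1 l u v W) := by
  intro x y h
  unfold key1 at h
  simp only [toLex_inj, Prod.mk.injEq, OrderDual.toDual_inj] at h
  exact keyW_inj hW h.2

lemma keyG_inj (σ : ℤ) (hW : Function.Injective W) :
    Function.Injective (keyG l u v W σ) := by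
  intro x y h
  unfold keyG at h
  simp only [toLex_inj, Prod.mk.injEq] at h
  obtain ⟨-, h⟩ := h
  split_ifs at h <;> simp only [toLex_inj, Prod.mk.injEq] at h
  · exact hW h.2.2.2
  · exact absurd h.2.1 (by norm_num)
  · exact absurd h.2.1 (by norm_num)
  · exact hW h.2.2.2

end Stmt13Aux

open Stmt13Aux in
/-- Every finite unit mixed interval order — each element assigned a unit interval
that may be open, closed, or half-open, with `x < y` for distinct `x, y` iff every
point of the interval of `x` is less than every point of the interval of `y` —
has dimension at most 3. -/
theorem stmt_13 {α : Type*} [Fintype α] [PartialOrder α]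
    (h : ∃ (l : α → ℝ) (I : α → Set ℝ),
      (∀ x, I x = Set.Ioo (l x) (l x + 1) ∨ I x = Set.Icc (l x) (l x + 1) ∨
        I x = Set.Ioc (l x) (l x + 1) ∨ I x = Set.Ico (l x) (l x + 1)) ∧
      ∀ x y : α, x ≠ y → (x < y ↔ ∀ s ∈ I x, ∀ t ∈ I y, s < t)) :
    DimLE α 3 := by
  classical
  obtain ⟨l, I, hI, hcomp⟩ := h
  set u : α → ℤ := fun z => if l z ∈ I z then 0 else 1 with hu_def
  set v : α → ℤ := fun z => if l z + 1 ∈ I z then 0 else -1 with hv_def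
  set W : α → ℕ := fun z => ((Fintype.equivFin α) z : ℕ) with hW_def
  have hWinj : Function.Injective W := by
    intro a b hab
    exact (Fintype.equivFin α).injective (Fin.val_injective hab)
  have hu01 : ∀ z, u z = 0 ∨ u z = 1 := by
    intro z; simp only [hu_def]; split_ifs <;> simp
  have hv01 : ∀ z, v z = -1 ∨ v z = 0 := by
    intro z; simp only [hv_def]; split_ifs <;> simp
  have hsub : ∀ z, Set.Ioo (l z) (l z + 1) ⊆ I z ∧ I z ⊆ Set.Icc (l z) (l z + 1) := by
    intro z
    rcases hI z with hz | hz | hz | hz <;> rw [hz]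
    · exact ⟨subset_rfl, Set.Ioo_subset_Icc_self⟩
    · exact ⟨Set.Ioo_subset_Icc_self, subset_rfl⟩
    · exact ⟨Set.Ioo_subset_Ioc_self, Set.Ioc_subset_Icc_self⟩
    · exact ⟨Set.Ioo_subset_Ico_self, Set.Ico_subset_Icc_self⟩
  -- the order characterisation
  have hchar : ∀ x y : α, x < y ↔ bval l v x < aval l u y := by
    intro x y
    have hlex : (bval l v x < aval l u y) ↔
        (l x + 1 < l y ∨ (l x + 1 = l y ∧ v x < u y)) := by
      unfold bval aval
      exact Prod.Lex.lt_iff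
    by_cases hxy : x = y
    · subst hxy
      rw [hlex]
      simp only [lt_self_iff_false, false_iff]
      rintro (h' | ⟨h', -⟩) <;> linarith
    · rw [hcomp x y hxy, hlex]
      constructor
      · intro hst
        by_contra hc
        push_neg at hc
        obtain ⟨hc1, hc2⟩ := hc
        rcases eq_or_lt_of_le hc1 with heq | hlt2
        · -- l y = l x + 1 and u y ≤ v x, so both endpoints belong
          have h2 := hc2 heq.symm
          have hvx : l x + 1 ∈ I x := by
            by_contra hm
            have hv' : v x = -1 := by simp only [hv_def]; rw [if_neg hm]
            rcases hu01 y with h' | h' <;> omega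
          have huy : l y ∈ I y := by
            by_contra hm
            have hu' : u y = 1 := by simp only [hu_def]; rw [if_neg hm]
            rcases hv01 x with h' | h' <;> omega
          have := hst (l x + 1) hvx (l y) huy
          linarith
        · -- l y < l x + 1 : the intervals meet
          by_cases hfar : l y + 1 ≤ l x
          · have hs : l x + 1/2 ∈ I x :=
              (hsub x).1 (Set.mem_Ioo.mpr ⟨by linarith, by linarith⟩)
            have ht : l y + 1/2 ∈ I y :=
              (hsub y).1 (Set.mem_Ioo.mpr ⟨by linarith, by linarith⟩)
            have := hst _ hs _ ht
            linarith
          · push_neg at hfar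
            set m := (max (l x) (l y) + min (l x + 1) (l y + 1)) / 2 with hm_def
            have hmm : max (l x) (l y) < min (l x + 1) (l y + 1) := by
              apply max_lt <;> apply lt_min <;> linarith
            have h1 : l x ≤ max (l x) (l y) := le_max_left _ _
            have h2 : l y ≤ max (l x) (l y) := le_max_right _ _
            have h3 : min (l x + 1) (l y + 1) ≤ l x + 1 := min_le_left _ _
            have h4 : min (l x + 1) (l y + 1) ≤ l y + 1 := min_le_right _ _
            have hmx : m ∈ Set.Ioo (l x) (l x + 1) :=
              Set.mem_Ioo.mpr ⟨by rw [hm_def]; linarith, by rw [hm_def]; linarith⟩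
            have hmy : m ∈ Set.Ioo (l y) (l y + 1) :=
              Set.mem_Ioo.mpr ⟨by rw [hm_def]; linarith, by rw [hm_def]; linarith⟩
            exact lt_irrefl m (hst m ((hsub x).1 hmx) m ((hsub y).1 hmy))
      · rintro (h1 | ⟨heq, hvu⟩) s hs t ht
        · have hs' := (hsub x).2 hs
          have ht' := (hsub y).2 ht
          rw [Set.mem_Icc] at hs' ht'
          linarith [hs'.2, ht'.1]
        · have hs' := (hsub x).2 hs
          have ht' := (hsub y).2 ht
          rw [Set.mem_Icc] at hs' ht'
          rcases lt_or_eq_of_le hs'.2 with hslt | hseq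
          · linarith [ht'.1]
          · rcases lt_or_eq_of_le ht'.1 with htlt | hteq
            · linarith
            · exfalso
              have hvx : v x = 0 := by
                simp only [hv_def]
                rw [if_pos (hseq ▸ hs)]
              have huy : u y = 0 := by
                simp only [hu_def]
                rw [if_pos (hteq ▸ ht)]
              rw [hvx, huy] at hvu
              exact lt_irrefl _ hvu
  have hninc : ∀ x y : α, ¬ x < y → aval l u y ≤ bval l v x := by
    intro x y h'
    exact not_lt.mp (fun hl => h' ((hchar x y).mpr hl))
  -- the three linear extensions
  set R0 : α → α → Prop := fun a b => key1 l u v W a ≤ key1 l u v W b with hR0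
  set R1 : α → α → Prop := fun a b => keyG l u v W 0 a ≤ keyG l u v W 0 b with hR1
  set R2 : α → α → Prop := fun a b => keyG l u v W 1 a ≤ keyG l u v W 1 b with hR2
  have hext0 : IsLinearExtension R0 := by
    refine ⟨keyLinear _ (key1_inj hWinj), ?_⟩
    intro x y hxy
    rcases hxy.lt_or_eq with h' | h'
    · exact le_of_lt (ext1 ((hchar x y).mp h'))
    · rw [h']
  have hext1 : IsLinearExtension R1 := by
    refine ⟨keyLinear _ (keyG_inj 0 hWinj), ?_⟩
    intro x y hxy
    rcases hxy.lt_or_eq with h' | h'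
    · exact le_of_lt (extG 0 ((hchar x y).mp h'))
    · rw [h']
  have hext2 : IsLinearExtension R2 := by
    refine ⟨keyLinear _ (keyG_inj 1 hWinj), ?_⟩
    intro x y hxy
    rcases hxy.lt_or_eq with h' | h'
    · exact le_of_lt (extG 1 ((hchar x y).mp h'))
    · rw [h']
  refine ⟨![R0, R1, R2], ?_, ?_⟩
  · intro i
    fin_cases i
    · exact hext0
    · exact hext1
    · exact hext2
  · intro x y
    constructor
    · intro hxy i
      fin_cases i
      · exact hext0.2 x y hxy
      · exact hext1.2 x y hxy
      · exact hext2.2 x y hxy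
    · intro hall
      by_contra hxy
      have hne : x ≠ y := fun he => hxy (he ▸ le_refl x)
      have hnlt : ¬ x < y := fun hl => hxy hl.le
      have h0 : R0 x y := hall 0
      have h1 : R1 x y := hall 1
      have h2 : R2 x y := hall 2
      by_cases hyx : y < x
      · exact absurd h0 ((ext1 ((hchar y x).mp hyx)).not_ge)
      · have hba1 : aval l u x ≤ bval l v y := hninc y x hyx
        have hba2 : aval l u y ≤ bval l v x := hninc x y hnlt
        rcases (by omega : ⌊l x⌋ + 2 ≤ ⌊l y⌋ ∨ ⌊l y⌋ + 2 ≤ ⌊l x⌋ ∨ ⌊l x⌋ = ⌊l y⌋ + 1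
            ∨ ⌊l x⌋ = ⌊l y⌋ ∨ ⌊l y⌋ = ⌊l x⌋ + 1) with hb | hb | hb | hb | hb
        · exact hnlt ((hchar x y).mpr (far_lt hb))
        · exact hyx ((hchar y x).mpr (far_lt hb))
        · exact absurd h0 ((rev1b (by omega)).not_ge)
        · -- same block
          have hWne : keyW l u v W x ≠ keyW l u v W y :=
            fun he => hne (keyW_inj hWinj he)
          rcases hWne.lt_or_gt with hw | hw
          · exact absurd h0 ((rev1W hb hw).not_ge)
          · rcases Int.even_or_odd ⌊l x⌋ with he | ho
            · obtain ⟨k, hk⟩ := he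
              have hgb := gg_bounds (l := l) 1 x
              exact absurd h2 ((revGsame 1 hb (by omega) hw).not_ge)
            · obtain ⟨k, hk⟩ := ho
              have hgb := gg_bounds (l := l) 0 x
              exact absurd h1 ((revGsame 0 hb (by omega) hw).not_ge)
        · -- adjacent blocks, y above x
          rcases Int.even_or_odd ⌊l x⌋ with he | ho
          · obtain ⟨k, hk⟩ := he
            have hgb := gg_bounds (l := l) 0 x
            exact absurd h1 ((revGcross 0 hb (by omega) hba2).not_ge)
          · obtain ⟨k, hk⟩ := ho
            have hgb := gg_bounds (l := l) 1 x
            exact absurd h2 ((revGcross 1 hb (by omega) hba2).not_ge)
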